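/- Let R be a commutative ring, C an R-module with an internal direct sum decomposition C = V ⊕ W ⊕ C′, and d : C → C an R-linear map with d ∘ d = 0 such that the component d_{V←W} = π_V ∘ d ∘ ι_W : W → V is bijective. Define d′ = d_{C′←C′} − d_{C′←W} ∘ (d_{V←W})⁻¹ ∘ d_{V←C′} : C′ → C′, and the R-linear maps f : C′ → C, f = ι_{C′} − ι_W ∘ (d_{V←W})⁻¹ ∘ d_{V←C′}; g : C → C′, g = π_{C′} − d_{C′←W} ∘ (d_{V←W})⁻¹ ∘ π_V; and h : C → C, h = ι_W ∘ (d_{V←W})⁻¹ ∘ π_V. Then the following four identities hold: f ∘ d′ = d ∘ f, g ∘ d = d′ ∘ g, g ∘ f = id_{C′}, and id_C = f ∘ g + h ∘ d + d ∘ h. In particular (C, d) and (C′, d′) are chain homotopy equivalent. -/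

import Mathlib

/-- The cancellation lemma with the chain homotopy equivalence data:
`f ∘ d' = d ∘ f`, `g ∘ d = d' ∘ g`, `g ∘ f = id`, and `id = f ∘ g + h ∘ d + d ∘ h`;
in particular `(C, d)` and `(C', d')` are chain homotopy equivalent. -/
theorem stmt1 {R : Type*} [CommRing R] {C : Type*} [AddCommGroup C] [Module R C]
    (V W C' : Submodule R C)
    (πV : C →ₗ[R] V) (πW : C →ₗ[R] W) (πC : C →ₗ[R] C')
    (hsum : ∀ x : C, (πV x : C) + (πW x : C) + (πC x : C) = x)
    (hVV : ∀ v : V, πV (v : C) = v)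
    (hVW : ∀ v : V, πW (v : C) = 0)
    (hVC : ∀ v : V, πC (v : C) = 0)
    (hWV : ∀ w : W, πV (w : C) = 0)
    (hWW : ∀ w : W, πW (w : C) = w)
    (hWC : ∀ w : W, πC (w : C) = 0)
    (hCV : ∀ z : C', πV (z : C) = 0)
    (hCW : ∀ z : C', πW (z : C) = 0)
    (hCC : ∀ z : C', πC (z : C) = z)
    (d : C →ₗ[R] C) (hd : d ∘ₗ d = 0)
    (hbij : Function.Bijective (πV ∘ₗ d ∘ₗ W.subtype))
    (d' : C' →ₗ[R] C')
    (hd' : d' = (πC ∘ₗ d ∘ₗ C'.subtype)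
        - (πC ∘ₗ d ∘ₗ W.subtype) ∘ₗ
          (LinearEquiv.ofBijective (πV ∘ₗ d ∘ₗ W.subtype) hbij).symm.toLinearMap ∘ₗ
          (πV ∘ₗ d ∘ₗ C'.subtype))
    (f : C' →ₗ[R] C)
    (hf : f = C'.subtype
        - W.subtype ∘ₗ
          (LinearEquiv.ofBijective (πV ∘ₗ d ∘ₗ W.subtype) hbij).symm.toLinearMap ∘ₗ
          (πV ∘ₗ d ∘ₗ C'.subtype))
    (g : C →ₗ[R] C')
    (hg : g = πC
        - (πC ∘ₗ d ∘ₗ W.subtype) ∘ₗ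
          (LinearEquiv.ofBijective (πV ∘ₗ d ∘ₗ W.subtype) hbij).symm.toLinearMap ∘ₗ πV)
    (h : C →ₗ[R] C)
    (hh : h = W.subtype ∘ₗ
          (LinearEquiv.ofBijective (πV ∘ₗ d ∘ₗ W.subtype) hbij).symm.toLinearMap ∘ₗ πV) :
    f ∘ₗ d' = d ∘ₗ f ∧
    g ∘ₗ d = d' ∘ₗ g ∧
    g ∘ₗ f = LinearMap.id ∧
    (LinearMap.id : C →ₗ[R] C) = f ∘ₗ g + h ∘ₗ d + d ∘ₗ h := by
  set σ := (LinearEquiv.ofBijective (πV ∘ₗ d ∘ₗ W.subtype) hbij).symm with hσ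
  have hd0 : ∀ x : C, d (d x) = 0 := fun x => by
    have := LinearMap.ext_iff.mp hd x; simpa using this
  have he1 : ∀ v : V, πV (d ((σ v : W) : C)) = v := by
    intro v
    have := (LinearEquiv.ofBijective (πV ∘ₗ d ∘ₗ W.subtype) hbij).apply_symm_apply v
    simpa only [LinearEquiv.ofBijective_apply, LinearMap.coe_comp, Function.comp_apply,
      Submodule.coe_subtype] using this
  have he2 : ∀ w : W, σ (πV (d (w : C))) = w := by
    intro w
    have := (LinearEquiv.ofBijective (πV ∘ₗ d ∘ₗ W.subtype) hbij).symm_apply_apply w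
    simpa only [LinearEquiv.ofBijective_apply, LinearMap.coe_comp, Function.comp_apply,
      Submodule.coe_subtype] using this
  -- pointwise descriptions
  have hfz : ∀ z : C', f z = (z : C) - ((σ (πV (d (z : C))) : W) : C) := by
    intro z; simp [hf]
  have hgz : ∀ x : C, g x = πC x - πC (d ((σ (πV x) : W) : C)) := by
    intro x; simp [hg]
  have hhz : ∀ x : C, h x = ((σ (πV x) : W) : C) := by
    intro x; simp [hh]
  have hdz : ∀ z : C', d' z = πC (d (z : C)) - πC (d ((σ (πV (d (z : C))) : W) : C)) := by
    intro z; simp [hd']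
  -- the key structural lemma
  have lemA : ∀ u : C, πV u = 0 → πV (d u) = 0 → u = f (πC u) := by
    intro u h1 h2
    have hu : ((πW u : C)) + ((πC u : C)) = u := by
      have := hsum u; rw [h1] at this; simpa using this
    have hdu : πV (d ((πW u : C))) + πV (d ((πC u : C))) = 0 := by
      rw [← map_add, ← map_add, hu, h2]
    have h3 : πV (d ((πW u : C))) = - πV (d ((πC u : C))) :=
      eq_neg_of_add_eq_zero_left hdu
    have h4 : (πW u) = - σ (πV (d ((πC u : C)))) := by
      have := he2 (πW u)
      rw [h3, map_neg] at this
      exact this.symm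
    have h5 : ((πW u : C)) = - ((σ (πV (d ((πC u : C)))) : W) : C) := by
      rw [h4]; simp
    rw [hfz]
    conv_lhs => rw [← hu]
    rw [h5]
    abel
  -- key component facts about f
  have hfV : ∀ z : C', πV (f z) = 0 := by
    intro z; rw [hfz]; rw [map_sub, hCV, hWV, sub_zero]
  have hfdV : ∀ z : C', πV (d (f z)) = 0 := by
    intro z; rw [hfz, map_sub, map_sub, he1, sub_self]
  have hfC : ∀ z : C', πC (f z) = z := by
    intro z; rw [hfz, map_sub, hCC, hWC, sub_zero]
  -- identity 1 pointwise
  have k1 : ∀ z : C', f (d' z) = d (f z) := by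
    intro z
    have := lemA (d (f z)) (hfdV z) (by rw [hd0, map_zero])
    rw [this]
    congr 1
    rw [hfz, map_sub, map_sub, hdz]
  -- identity 3 pointwise
  have k3 : ∀ z : C', g (f z) = z := by
    intro z
    rw [hgz, hfV, hfC, map_zero]
    simp
  -- identity 4 pointwise
  have k4 : ∀ x : C, x = f (g x) + h (d x) + d (h x) := by
    intro x
    set u := x - h (d x) - d (h x) with hu
    have h1 : πV u = 0 := by
      rw [hu, map_sub, map_sub, hhz, hhz, hWV, he1, sub_zero, sub_self]
    have h2 : πV (d u) = 0 := by
      have : d u = d x - d (h (d x)) := by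
        rw [hu, map_sub, map_sub, hd0 (h x), sub_zero]
      rw [this, map_sub, hhz, he1, sub_self]
    have h3 : πC u = g x := by
      rw [hu, map_sub, map_sub, hhz, hhz, hWC, sub_zero, hgz]
    have := lemA u h1 h2
    rw [h3] at this
    rw [← this, hu]
    abel
  -- g (d (h u)) = 0
  have k5 : ∀ x : C, g (d (h x)) = 0 := by
    intro x
    rw [hhz, hgz, he1, sub_self]
  -- identity 2 pointwise
  have k2 : ∀ x : C, g (d x) = d' (g x) := by
    intro x
    have hx := k4 x
    have : d x = d (f (g x)) + d (h (d x)) := by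
      conv_lhs => rw [hx]
      rw [map_add, map_add, hd0 (h x), add_zero]
    rw [this, map_add, k5 (d x), add_zero, ← k1, k3]
  refine ⟨?_, ?_, ?_, ?_⟩
  · exact LinearMap.ext k1
  · exact LinearMap.ext fun x => (k2 x).symm ▸ rfl
  · exact LinearMap.ext k3
  · refine LinearMap.ext fun x => ?_
    simpa using k4 x
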